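/- Let M be the group of vectors (α₀,…,α_{2g}) ∈ ℚ^{2g+1} such that Σ_k α_k i^k ∈ ℤ and Σ_k α_k i^{2g−k} ∈ ℤ for all integers i ≥ 0. Then M is a free ℤ-module of rank 2g+1 containing ℤ^{2g+1} as a subgroup of finite index. -/

import Mathlib

/-- The group `M` of rational vectors `(α₀,…,α_{2g})` such that `Σ_k α_k i^k ∈ ℤ` and
`Σ_k α_k i^{2g-k} ∈ ℤ` for all natural numbers `i` is a free ℤ-module of rank `2g+1`
containing `ℤ^{2g+1}` as a subgroup of finite index. -/
theorem stmt_12 (g : ℕ) (hg : 1 ≤ g)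
    (M : Submodule ℤ (Fin (2 * g + 1) → ℚ))
    (hM : ∀ α : Fin (2 * g + 1) → ℚ, α ∈ M ↔
      ∀ i : ℕ, (∃ m : ℤ, ∑ k : Fin (2 * g + 1), α k * (i : ℚ) ^ (k : ℕ) = m) ∧
        (∃ m : ℤ, ∑ k : Fin (2 * g + 1), α k * (i : ℚ) ^ (2 * g - (k : ℕ)) = m)) :
    Module.Free ℤ M ∧ Module.finrank ℤ M = 2 * g + 1 ∧
    (∀ v : Fin (2 * g + 1) → ℤ, (fun k => (v k : ℚ)) ∈ M) ∧
    (∃ D : ℕ, 0 < D ∧ ∀ α ∈ M, ∀ k, ∃ m : ℤ, (D : ℚ) * α k = m) := by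
  have hZ : ∀ v : Fin (2 * g + 1) → ℤ, (fun k => (v k : ℚ)) ∈ M := by
    intro v
    rw [hM]
    intro i
    constructor
    · exact ⟨∑ k : Fin (2*g+1), v k * (i:ℤ) ^ (k:ℕ), by push_cast; ring⟩
    · exact ⟨∑ k : Fin (2*g+1), v k * (i:ℤ) ^ (2*g - (k:ℕ)), by push_cast; ring⟩
  set Vz : Matrix (Fin (2*g+1)) (Fin (2*g+1)) ℤ := Matrix.vandermonde (fun i => ((i:ℕ):ℤ)) with hVz
  have hdetpos : 0 < Vz.det := by
    rw [hVz, Matrix.det_vandermonde]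
    refine Finset.prod_pos fun i _ => Finset.prod_pos fun j hj => ?_
    rw [Finset.mem_Ioi] at hj
    have h : (i:ℕ) < (j:ℕ) := hj
    have : ((i:ℕ):ℤ) < ((j:ℕ):ℤ) := by exact_mod_cast h
    omega
  have key : ∀ α ∈ M, ∀ k, ∃ m : ℤ, (Vz.det : ℚ) * α k = m := by
    intro α hα k
    choose b hb using fun i : Fin (2*g+1) => ((hM α).mp hα (i:ℕ)).1
    have hmv : (Vz.map ((↑) : ℤ → ℚ)).mulVec α = fun i => (b i : ℚ) := by
      funext i
      rw [← hb i]
      simp [Matrix.mulVec, dotProduct, hVz, Matrix.vandermonde, mul_comm]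
    have h2 : ((Vz.map ((↑) : ℤ → ℚ)).adjugate * (Vz.map ((↑) : ℤ → ℚ))).mulVec α
        = (Vz.det : ℚ) • α := by
      rw [Matrix.adjugate_mul, Matrix.smul_mulVec, Matrix.one_mulVec,
        show Vz.map ((↑) : ℤ → ℚ) = (Int.castRingHom ℚ).mapMatrix Vz from rfl,
        ← RingHom.map_det]
      rfl
    rw [← Matrix.mulVec_mulVec, hmv] at h2
    refine ⟨∑ j, Vz.adjugate k j * b j, ?_⟩
    have h3 := congrFun h2 k
    have h4 : (Vz.map ((↑) : ℤ → ℚ)).adjugate = (Vz.adjugate).map ((↑) : ℤ → ℚ) := by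
      have := RingHom.map_adjugate (Int.castRingHom ℚ) Vz
      simpa [RingHom.mapMatrix_apply] using this.symm
    rw [h4] at h3
    simp only [Pi.smul_apply, smul_eq_mul] at h3
    rw [← h3]
    simp [Matrix.mulVec, dotProduct]
  have hdne : (Vz.det : ℚ) ≠ 0 := by exact_mod_cast hdetpos.ne'
  -- linear map M → ℤ^(2g+1)
  let e : M →ₗ[ℤ] (Fin (2*g+1) → ℤ) :=
    { toFun := fun α k => ((Vz.det : ℚ) * α.1 k).num
      map_add' := by
        intro α β
        funext k
        obtain ⟨m, hm⟩ := key α.1 α.2 k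
        obtain ⟨m', hm'⟩ := key β.1 β.2 k
        have h1 : (Vz.det : ℚ) * (↑(α + β) : Fin (2*g+1) → ℚ) k = ((m + m' : ℤ) : ℚ) := by
          rw [Submodule.coe_add, Pi.add_apply, mul_add, hm, hm']
          push_cast
          ring
        simp only [Pi.add_apply, h1, hm, hm', Rat.num_intCast]
      map_smul' := by
        intro c α
        funext k
        obtain ⟨m, hm⟩ := key α.1 α.2 k
        have h1 : (Vz.det : ℚ) * (↑(c • α) : Fin (2*g+1) → ℚ) k = ((c * m : ℤ) : ℚ) := by
          rw [Submodule.coe_smul, Pi.smul_apply]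
          rw [zsmul_eq_mul]
          push_cast
          rw [mul_left_comm, ← hm, Int.cast_det]
        simp only [h1, hm, Rat.num_intCast, RingHom.id_apply, Pi.smul_apply, smul_eq_mul] }
  have he : Function.Injective e := by
    intro α β h
    ext k
    obtain ⟨m, hm⟩ := key α.1 α.2 k
    obtain ⟨m', hm'⟩ := key β.1 β.2 k
    have h1 : ((Vz.det : ℚ) * α.1 k).num = ((Vz.det : ℚ) * β.1 k).num := congrFun h k
    rw [hm, hm', Rat.num_intCast, Rat.num_intCast] at h1
    subst h1
    have : (Vz.det : ℚ) * α.1 k = (Vz.det : ℚ) * β.1 k := by rw [hm, hm']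
    exact mul_left_cancel₀ hdne this
  haveI : IsNoetherian ℤ M := isNoetherian_of_injective e he
  haveI : Module.Finite ℤ M := inferInstance
  haveI : Module.Free ℤ M := Module.free_of_finite_type_torsion_free'
  -- injection ℤ^n → M
  let c : (Fin (2*g+1) → ℤ) →ₗ[ℤ] (Fin (2*g+1) → ℚ) :=
    { toFun := fun v k => (v k : ℚ)
      map_add' := by intro v w; funext k; push_cast; simp
      map_smul' := by
        intro a v
        funext k
        simp only [Pi.smul_apply, smul_eq_mul, zsmul_eq_mul, RingHom.id_apply]
        push_cast
        ring }
  let j : (Fin (2*g+1) → ℤ) →ₗ[ℤ] M := c.codRestrict M (fun v => hZ v)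
  have hj : Function.Injective j := by
    intro v w h
    funext k
    have h2 : ((v k : ℤ):ℚ) = ((w k : ℤ):ℚ) := congrFun (congrArg (Subtype.val) h) k
    exact_mod_cast h2
  have hfr : Module.finrank ℤ M = 2 * g + 1 := by
    have h1 : Module.finrank ℤ M ≤ Module.finrank ℤ (Fin (2*g+1) → ℤ) :=
      LinearMap.finrank_le_finrank_of_injective he
    have h2 : Module.finrank ℤ (Fin (2*g+1) → ℤ) ≤ Module.finrank ℤ M :=
      LinearMap.finrank_le_finrank_of_injective hj
    have h3 : Module.finrank ℤ (Fin (2*g+1) → ℤ) = 2*g+1 := by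
      simp [Module.finrank_pi]
    omega
  refine ⟨inferInstance, hfr, hZ, Vz.det.toNat, by omega, ?_⟩
  intro α hα k
  obtain ⟨m, hm⟩ := key α hα k
  refine ⟨m, ?_⟩
  rw [← hm]
  congr 1
  exact_mod_cast congrArg (fun z : ℤ => (z : ℚ)) (Int.toNat_of_nonneg hdetpos.le)
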